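/- For every w ∈ 𝐖 and every segment [a,b] ⊆ ℝ₊, the amplitude of w̄ − w on [a,b] is at most the amplitude of w on [a,b], where w̄(t) = max_{[0,t]} w is the running maximum and amp_{[a,b]} f = max_{[a,b]} f − min_{[a,b]} f. -/

import Mathlib

open MeasureTheory

/-- The amplitude of `w` on the segment `[a,b]`. -/
noncomputable def amp (w : ℝ → ℝ) (a b : ℝ) : ℝ :=
  sSup (w '' Set.Icc a b) - sInf (w '' Set.Icc a b)

/-- The running maximum `w̄(t) = max_{0 ≤ s ≤ t} w(s)`. -/
noncomputable def runMax (w : ℝ → ℝ) (t : ℝ) : ℝ :=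
  sSup (w '' Set.Icc 0 t)

/-- the amplitude of `w̄ - w` on a segment `[a,b] ⊆ ℝ₊` is at most the
amplitude of `w` on `[a,b]`. -/
theorem amp_runMax_sub_le
    (w : ℝ → ℝ) (hw : Continuous w) (hw0 : w 0 = 0)
    (a b : ℝ) (ha : 0 ≤ a) (hab : a ≤ b) :
    amp (fun s => runMax w s - w s) a b ≤ amp w a b := by
  have hBdd : ∀ u v : ℝ, BddAbove (w '' Set.Icc u v) :=
    fun u v => (isCompact_Icc).bddAbove_image hw.continuousOn
  have hBddB : ∀ u v : ℝ, BddBelow (w '' Set.Icc u v) :=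
    fun u v => (isCompact_Icc).bddBelow_image hw.continuousOn
  set M := sSup (w '' Set.Icc a b) with hM
  set m := sInf (w '' Set.Icc a b) with hm
  -- pointwise bounds
  have hwM : ∀ t ∈ Set.Icc a b, w t ≤ M :=
    fun t ht => le_csSup (hBdd a b) ⟨t, ht, rfl⟩
  have hwm : ∀ t ∈ Set.Icc a b, m ≤ w t :=
    fun t ht => csInf_le (hBddB a b) ⟨t, ht, rfl⟩
  -- w t ≤ runMax w t for 0 ≤ t
  have hself : ∀ t : ℝ, 0 ≤ t → w t ≤ runMax w t :=
    fun t ht => le_csSup (hBdd 0 t) ⟨t, ⟨ht, le_refl t⟩, rfl⟩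
  -- monotonicity of runMax
  have hmono : ∀ s t : ℝ, s ≤ t → runMax w s ≤ runMax w t := by
    intro s t hst
    rcases le_or_gt 0 s with h0s | h0s
    · exact csSup_le_csSup (hBdd 0 t) ⟨w s, s, ⟨h0s, le_rfl⟩, rfl⟩
        (Set.image_mono (f := w) (Set.Icc_subset_Icc_right hst))
    · rcases le_or_gt 0 t with h0t | h0t
      · have h1 : Set.Icc (0:ℝ) s = ∅ := Set.Icc_eq_empty (not_le.mpr h0s)
        have h2 : (0:ℝ) ≤ runMax w t := by
          have := le_csSup (hBdd 0 t) ⟨0, ⟨le_rfl, h0t⟩, rfl⟩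
          rwa [hw0] at this
        simpa [runMax, h1, Real.sSup_empty] using h2
      · have h1 : Set.Icc (0:ℝ) s = ∅ := Set.Icc_eq_empty (not_le.mpr h0s)
        have h2 : Set.Icc (0:ℝ) t = ∅ := Set.Icc_eq_empty (not_le.mpr h0t)
        simp [runMax, h1, h2]
  -- splitting lemma
  have hsplit : ∀ s t : ℝ, 0 ≤ s → s ≤ t →
      runMax w t = max (runMax w s) (sSup (w '' Set.Icc s t)) := by
    intro s t h0s hst
    have hU : Set.Icc (0:ℝ) s ∪ Set.Icc s t = Set.Icc 0 t :=
      Set.Icc_union_Icc_eq_Icc h0s hst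
    have : runMax w t = sSup (w '' (Set.Icc (0:ℝ) s ∪ Set.Icc s t)) := by
      rw [hU]; rfl
    rw [this, Set.image_union]
    exact csSup_union (hBdd 0 s) (⟨w 0, 0, ⟨le_rfl, h0s⟩, rfl⟩)
      (hBdd s t) (⟨w s, s, ⟨le_rfl, hst⟩, rfl⟩)
  set f : ℝ → ℝ := fun s => runMax w s - w s with hf
  -- key estimate
  have key : ∀ s ∈ Set.Icc a b, ∀ t ∈ Set.Icc a b, f t - f s ≤ M - m := by
    intro s hs t ht
    have h0s : (0:ℝ) ≤ s := ha.trans hs.1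
    have h0t : (0:ℝ) ≤ t := ha.trans ht.1
    have hws : w s ≤ runMax w s := hself s h0s
    have hcase : runMax w t ≤ runMax w s ∨ runMax w t ≤ M := by
      rcases le_total t s with hts | hst
      · exact Or.inl (hmono t s hts)
      · rcases max_cases (runMax w s) (sSup (w '' Set.Icc s t)) with ⟨h1, _⟩ | ⟨h1, _⟩
        · exact Or.inl (le_of_eq ((hsplit s t h0s hst).trans h1))
        · refine Or.inr ?_
          rw [hsplit s t h0s hst, h1]
          exact csSup_le_csSup (hBdd a b) ⟨w s, s, ⟨le_rfl, hst⟩, rfl⟩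
            (Set.image_mono (f := w) (Set.Icc_subset_Icc hs.1 ht.2))
    rcases hcase with h | h
    · have : f t - f s ≤ w s - w t := by
        simp only [hf]; linarith
      linarith [hwM s hs, hwm t ht]
    · have : f t - f s ≤ runMax w t - w t := by
        simp only [hf]; linarith
      linarith [hwm t ht]
  -- finish
  have hane : a ∈ Set.Icc a b := ⟨le_rfl, hab⟩
  have hFne : (f '' Set.Icc a b).Nonempty := ⟨f a, a, hane, rfl⟩
  have hFbddB : BddBelow (f '' Set.Icc a b) := by
    refine ⟨0, ?_⟩
    rintro x ⟨t, ht, rfl⟩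
    have := hself t (ha.trans ht.1)
    simp only [hf]; linarith
  show sSup (f '' Set.Icc a b) - sInf (f '' Set.Icc a b) ≤ M - m
  rw [sub_le_iff_le_add]
  refine csSup_le hFne ?_
  rintro x ⟨t, ht, rfl⟩
  have hle : f t - (M - m) ≤ sInf (f '' Set.Icc a b) := by
    refine le_csInf hFne ?_
    rintro y ⟨s, hs, rfl⟩
    have := key s hs t ht
    linarith
  linarith
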